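/- (Derivative identity for the solvent volume fraction, equation (GammaPrime).) Fix M ≥ 1, v₀ > 0, ionic volumes v_l > 0, valences z_l ∈ ℝ, β > 0, e > 0, and bulk concentrations c_l^∞ > 0 with γ^∞ := 1 − Σ_l v_l c_l^∞ ∈ (0,1). Let γ : ℝ → (0,1) be the unique-root function of γ − 1 + Σ_{j=1}^M v_j c_j^∞ (γ/γ^∞)^{v_j/v₀} exp(−β z_j e ψ) = 0 and let B_l(ψ) = c_l^∞ (γ(ψ)/γ^∞)^{v_l/v₀} exp(−β z_l e ψ). Then γ is differentiable on ℝ and for every ψ ∈ ℝ, γ′(ψ) = β v₀ e γ(ψ) (Σ_{l=1}^M z_l v_l B_l(ψ)) / (v₀ γ(ψ) + Σ_{l=1}^M v_l² B_l(ψ)). -/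

import Mathlib

open scoped BigOperators

set_option maxHeartbeats 1000000 in
/-- derivative identity for the solvent volume fraction, eq. (GammaPrime):
`γ` is differentiable on `ℝ` and
`γ′(ψ) = β v₀ e γ(ψ) (∑ l, z_l v_l B_l(ψ)) / (v₀ γ(ψ) + ∑ l, v_l² B_l(ψ))`. -/
theorem solvent_fraction_deriv
    (M : ℕ) (hM : 1 ≤ M) (v₀ : ℝ) (hv₀ : 0 < v₀)
    (v z cinf : Fin M → ℝ) (hv : ∀ l, 0 < v l)
    (β e : ℝ) (hβ : 0 < β) (he : 0 < e)
    (hcinf : ∀ l, 0 < cinf l) (hsum : ∑ l, v l * cinf l < 1)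
    (γ : ℝ → ℝ)
    (hroot : ∀ ψ : ℝ, γ ψ ∈ Set.Ioo (0 : ℝ) 1 ∧
      γ ψ - 1 + ∑ j, v j * cinf j * (γ ψ / (1 - ∑ i, v i * cinf i)) ^ (v j / v₀) *
        Real.exp (-(β * z j * e * ψ)) = 0)
    (huniq : ∀ ψ x : ℝ, x ∈ Set.Ioo (0 : ℝ) 1 →
      x - 1 + ∑ j, v j * cinf j * (x / (1 - ∑ i, v i * cinf i)) ^ (v j / v₀) *
        Real.exp (-(β * z j * e * ψ)) = 0 → x = γ ψ)
    (B : Fin M → ℝ → ℝ)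
    (hB : ∀ l ψ, B l ψ = cinf l * (γ ψ / (1 - ∑ j, v j * cinf j)) ^ (v l / v₀) *
      Real.exp (-(β * z l * e * ψ))) :
    Differentiable ℝ γ ∧
    ∀ ψ : ℝ, deriv γ ψ =
      β * v₀ * e * γ ψ * (∑ l, z l * v l * B l ψ) /
        (v₀ * γ ψ + ∑ l, (v l) ^ 2 * B l ψ) := by
  set g : ℝ := 1 - ∑ i, v i * cinf i with hgdef
  have hg : 0 < g := by rw [hgdef]; exact sub_pos.mpr hsum
  have hgne : g ≠ 0 := ne_of_gt hg
  set Fn : ℝ × ℝ → ℝ := fun p =>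
    p.2 - 1 + ∑ j, v j * cinf j * (p.2 / g) ^ (v j / v₀) * Real.exp (-(β * z j * e * p.1))
    with hFn
  have key : ∀ ψ₀ : ℝ, HasDerivAt γ
      (β * v₀ * e * γ ψ₀ * (∑ l, z l * v l * B l ψ₀) /
        (v₀ * γ ψ₀ + ∑ l, (v l) ^ 2 * B l ψ₀)) ψ₀ := by
    intro ψ₀
    obtain ⟨hx₀, hFeq⟩ := hroot ψ₀
    set x₀ := γ ψ₀ with hx₀def
    have hx0 : 0 < x₀ := hx₀.1
    have hx1 : x₀ < 1 := hx₀.2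
    have hxg : x₀ / g ≠ 0 := ne_of_gt (div_pos hx0 hg)
    have hF0 : Fn (ψ₀, x₀) = 0 := hFeq
    -- derivative of Fn at (ψ₀, x₀)
    have hdiv : HasStrictFDerivAt (fun p : ℝ × ℝ => p.2 / g)
        (g⁻¹ • ContinuousLinearMap.snd ℝ ℝ ℝ) ((ψ₀, x₀) : ℝ × ℝ) := by
      have h := (hasStrictFDerivAt_snd (𝕜 := ℝ) (E := ℝ) (F := ℝ)
        (p := ((ψ₀, x₀) : ℝ × ℝ))).const_mul g⁻¹
      have heq : (fun p : ℝ × ℝ => p.2 / g) = fun p : ℝ × ℝ => g⁻¹ * p.2 := by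
        funext p; rw [div_eq_inv_mul]
      rw [heq]; exact h
    have hterm := fun j : Fin M =>
      (((hdiv.rpow_const (p := v j / v₀) (Or.inl hxg)).const_mul (v j * cinf j)).mul
        ((((hasStrictFDerivAt_fst (𝕜 := ℝ) (E := ℝ) (F := ℝ)
          (p := ((ψ₀, x₀) : ℝ × ℝ))).const_mul (β * z j * e)).neg).exp))
    have hFD := ((hasStrictFDerivAt_snd (𝕜 := ℝ) (E := ℝ) (F := ℝ)
      (p := ((ψ₀, x₀) : ℝ × ℝ))).sub_const 1).add
      (HasStrictFDerivAt.fun_sum (u := Finset.univ) fun j _ => hterm j)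
    obtain ⟨D, hFDn, ha, hb⟩ : ∃ D : ℝ × ℝ →L[ℝ] ℝ, HasStrictFDerivAt Fn D ((ψ₀, x₀) : ℝ × ℝ) ∧
        D (1, 0) = ∑ j, v j * cinf j * (x₀ / g) ^ (v j / v₀) *
          (Real.exp (-(β * z j * e * ψ₀)) * -(β * z j * e)) ∧
        D (0, 1) = 1 + ∑ j, Real.exp (-(β * z j * e * ψ₀)) *
          (v j * cinf j * (v j / v₀ * (x₀ / g) ^ (v j / v₀ - 1) * g⁻¹)) := by
      refine ⟨_, hFD, ?_, ?_⟩
      · simp [ContinuousLinearMap.sum_apply]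
      · simp [ContinuousLinearMap.sum_apply]
    set a : ℝ := D (1, 0) with hadef
    set b : ℝ := D (0, 1) with hbdef
    have hbpos : 0 < b := by
      rw [hb]
      have hnn : ∀ j ∈ (Finset.univ : Finset (Fin M)), 0 ≤ Real.exp (-(β * z j * e * ψ₀)) *
          (v j * cinf j * (v j / v₀ * (x₀ / g) ^ (v j / v₀ - 1) * g⁻¹)) := by
        intro j _
        have h1 := hv j; have h2 := hcinf j
        have h3 : (0:ℝ) < (x₀ / g) ^ (v j / v₀ - 1) := Real.rpow_pos_of_pos (div_pos hx0 hg) _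
        positivity
      linarith [Finset.sum_nonneg hnn]
    have hbne : b ≠ 0 := ne_of_gt hbpos
    have hDrepr : ∀ p : ℝ × ℝ, D p = p.1 * a + p.2 * b := by
      intro p
      have hp : p = p.1 • ((1:ℝ), (0:ℝ)) + p.2 • ((0:ℝ), (1:ℝ)) := by
        ext <;> simp
      conv_lhs => rw [hp]
      rw [map_add, map_smul, map_smul, hadef, hbdef]
      simp [smul_eq_mul]
    -- the map H and its local inverse
    set H : ℝ × ℝ → ℝ × ℝ := fun p => (p.1, Fn p) with hHdef
    have hH' : HasStrictFDerivAt H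
        ((ContinuousLinearMap.fst ℝ ℝ ℝ).prod D) ((ψ₀, x₀) : ℝ × ℝ) :=
      HasStrictFDerivAt.prodMk (hasStrictFDerivAt_fst (𝕜 := ℝ) (E := ℝ) (F := ℝ)) hFDn
    set Linv : ℝ × ℝ →L[ℝ] ℝ × ℝ := (ContinuousLinearMap.fst ℝ ℝ ℝ).prod
      ((-(a / b)) • ContinuousLinearMap.fst ℝ ℝ ℝ + b⁻¹ • ContinuousLinearMap.snd ℝ ℝ ℝ)
      with hLinvdef
    have hleft : Function.LeftInverse Linv ((ContinuousLinearMap.fst ℝ ℝ ℝ).prod D) := by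
      intro p
      have := hDrepr p
      ext
      · simp [hLinvdef]
      · simp [hLinvdef, this]
        field_simp
        ring
    have hright : Function.RightInverse Linv ((ContinuousLinearMap.fst ℝ ℝ ℝ).prod D) := by
      intro p
      ext
      · simp [hLinvdef]
      · simp [hLinvdef, hDrepr]
        field_simp
        ring
    set E : (ℝ × ℝ) ≃L[ℝ] (ℝ × ℝ) := ContinuousLinearEquiv.equivOfInverse _ _ hleft hright
      with hEdef
    have hH : HasStrictFDerivAt H (E : (ℝ × ℝ) →L[ℝ] (ℝ × ℝ)) ((ψ₀, x₀) : ℝ × ℝ) := hH'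
    set ginv := HasStrictFDerivAt.localInverse H E ((ψ₀, x₀) : ℝ × ℝ) hH with hginvdef
    have hH0 : H (ψ₀, x₀) = ((ψ₀ : ℝ), (0 : ℝ)) := by
      rw [show H (ψ₀, x₀) = (ψ₀, Fn (ψ₀, x₀)) from rfl, hF0]
    -- eventual equality of γ with the local inverse construction
    have hri := hH.eventually_right_inverse
    rw [hH0] at hri
    have hcont := hH.localInverse_continuousAt
    rw [hH0] at hcont
    have hginvp : ginv (ψ₀, 0) = ((ψ₀ : ℝ), x₀) := by
      rw [hginvdef, ← hH0]
      exact hH.localInverse_apply_image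
    have hmem : ∀ᶠ y in nhds ((ψ₀ : ℝ), (0 : ℝ)), (ginv y).2 ∈ Set.Ioo (0 : ℝ) 1 := by
      have hcsnd : ContinuousAt (fun y : ℝ × ℝ => (ginv y).2) (ψ₀, 0) :=
        continuous_snd.continuousAt.comp hcont
      apply hcsnd.eventually_mem
      rw [show ((ginv ((ψ₀ : ℝ), (0 : ℝ))).2 : ℝ) = x₀ by rw [hginvp]]
      exact isOpen_Ioo.mem_nhds hx₀
    have htend : Filter.Tendsto (fun ψ : ℝ => ((ψ, 0) : ℝ × ℝ)) (nhds ψ₀)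
        (nhds ((ψ₀ : ℝ), (0 : ℝ))) := by
      exact (continuous_id.prodMk continuous_const).continuousAt
    have hae : γ =ᶠ[nhds ψ₀] fun ψ => (ginv (ψ, 0)).2 := by
      filter_upwards [htend.eventually (hri.and hmem)] with ψ hψ
      obtain ⟨hH1, hmem1⟩ := hψ
      have hq1 : (ginv (ψ, 0)).1 = ψ := congrArg Prod.fst hH1
      have hq2 : Fn (ginv (ψ, 0)) = 0 := congrArg Prod.snd hH1
      have hqpair : ginv (ψ, 0) = ((ψ : ℝ), (ginv (ψ, 0)).2) :=
        (Prod.ext_iff).mpr ⟨hq1, rfl⟩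
      have hq3 : Fn (ψ, (ginv (ψ, 0)).2) = 0 := by rw [← hqpair]; exact hq2
      exact (huniq ψ _ hmem1 hq3).symm
    -- derivative of the local-inverse construction
    have hJ : HasStrictFDerivAt (fun ψ : ℝ => ((ψ, 0) : ℝ × ℝ))
        ((ContinuousLinearMap.id ℝ ℝ).prod 0) ψ₀ :=
      HasStrictFDerivAt.prodMk (hasStrictFDerivAt_id ψ₀) (hasStrictFDerivAt_const 0 ψ₀)
    have hgderiv := hH.to_localInverse
    rw [hH0, ← hginvdef] at hgderiv
    have hcomp := hgderiv.comp ψ₀ hJ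
    have hφ := (hasStrictFDerivAt_snd (𝕜 := ℝ) (E := ℝ) (F := ℝ)).comp ψ₀ hcomp
    have hder : HasDerivAt (fun ψ : ℝ => (ginv (ψ, 0)).2)
        (((ContinuousLinearMap.snd ℝ ℝ ℝ).comp
          (((E.symm : (ℝ × ℝ) →L[ℝ] (ℝ × ℝ))).comp
            ((ContinuousLinearMap.id ℝ ℝ).prod 0))) 1) ψ₀ :=
      hφ.hasStrictDerivAt.hasDerivAt
    have hval : (((ContinuousLinearMap.snd ℝ ℝ ℝ).comp
          (((E.symm : (ℝ × ℝ) →L[ℝ] (ℝ × ℝ))).comp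
            ((ContinuousLinearMap.id ℝ ℝ).prod 0))) 1) = -(a / b) := by
      rw [hEdef]
      rw [show ((ContinuousLinearEquiv.equivOfInverse _ _ hleft hright).symm :
          (ℝ × ℝ) →L[ℝ] (ℝ × ℝ)) = Linv from congrArg _
        (ContinuousLinearEquiv.symm_equivOfInverse _ _ hleft hright)]
      simp [hLinvdef]
    rw [hval] at hder
    have hγder : HasDerivAt γ (-(a / b)) ψ₀ := hder.congr_of_eventuallyEq hae
    -- identify the value
    have hS1 : a = -(β * e) * ∑ l, z l * v l * B l ψ₀ := by
      rw [ha, Finset.mul_sum]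
      refine Finset.sum_congr rfl fun j _ => by rw [hB]; ring
    have hS2 : b = (v₀ * x₀ + ∑ l, (v l) ^ 2 * B l ψ₀) / (v₀ * x₀) := by
      rw [hb]
      have hterm2 : ∀ j : Fin M, Real.exp (-(β * z j * e * ψ₀)) *
          (v j * cinf j * (v j / v₀ * (x₀ / g) ^ (v j / v₀ - 1) * g⁻¹)) =
          (v j) ^ 2 * B j ψ₀ / (v₀ * x₀) := by
        intro j
        rw [hB, Real.rpow_sub_one hxg]
        have := hv j
        field_simp
        ring
      rw [Finset.sum_congr rfl fun j _ => hterm2 j, ← Finset.sum_div]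
      rw [add_div]
      congr 1
      field_simp
    have hden : 0 < v₀ * x₀ + ∑ l, (v l) ^ 2 * B l ψ₀ := by
      have hnn : ∀ l ∈ (Finset.univ : Finset (Fin M)), (0:ℝ) ≤ (v l) ^ 2 * B l ψ₀ := by
        intro l _
        have h1 := hv l; have h2 := hcinf l
        have h3 : 0 < B l ψ₀ := by
          rw [hB]
          have : (0:ℝ) < (x₀ / g) ^ (v l / v₀) := Real.rpow_pos_of_pos (div_pos hx0 hg) _
          positivity
        positivity
      have := Finset.sum_nonneg hnn
      nlinarith [mul_pos hv₀ hx0]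
    have hfin : -(a / b) = β * v₀ * e * x₀ * (∑ l, z l * v l * B l ψ₀) /
        (v₀ * x₀ + ∑ l, (v l) ^ 2 * B l ψ₀) := by
      rw [hS1, hS2, div_div_eq_mul_div, ← neg_div]
      congr 1
      ring
    rwa [hfin] at hγder
  refine ⟨fun ψ => (key ψ).differentiableAt, fun ψ => (key ψ).deriv⟩
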